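/- Let k ≥ 1 and let K ⊆ ℝ^k be nonempty. Let a ∈ ℝ^k ∖ K and suppose the distance function d_K := dist(·, K) admits a second-order Taylor expansion at a with data (p, X): there are p ∈ ℝ^k and a symmetric k×k matrix X such that d_K(z) = d_K(a) + ⟨p, z − a⟩ + ½⟨X(z − a), z − a⟩ + o(‖z − a‖²) as z → a. Let b ∈ K satisfy ‖a − b‖ = d_K(a). Then for every α > 0 the function φ(z) := ⟨p, z − b⟩ + ½⟨(X − α I)(z − b), z − b⟩ has a strict local maximum on K at b: there exists ε > 0 such that φ(z) < φ(b) = 0 for every z ∈ K with 0 < ‖z − b‖ < ε. -/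

import Mathlib

open Metric Set Asymptotics

theorem stmt7 (k : ℕ) (hk : 1 ≤ k)
    (K : Set (EuclideanSpace ℝ (Fin k))) (hKne : K.Nonempty)
    (a : EuclideanSpace ℝ (Fin k)) (ha : a ∉ K)
    (p : EuclideanSpace ℝ (Fin k))
    (X : EuclideanSpace ℝ (Fin k) →L[ℝ] EuclideanSpace ℝ (Fin k))
    (hXsym : ∀ v w, (inner ℝ (X v) w : ℝ) = (inner ℝ v (X w) : ℝ))
    (hTaylor :
      (fun z => Metric.infDist z K - Metric.infDist a K - (inner ℝ p (z - a) : ℝ)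
          - (1 / 2) * (inner ℝ (X (z - a)) (z - a) : ℝ))
        =o[nhds a] (fun z => ‖z - a‖ ^ 2))
    (b : EuclideanSpace ℝ (Fin k)) (hbK : b ∈ K) (hb : ‖a - b‖ = Metric.infDist a K) :
    ∀ α : ℝ, 0 < α → ∃ ε > 0, ∀ z ∈ K, z ≠ b → ‖z - b‖ < ε →
      (inner ℝ p (z - b) : ℝ)
        + (1 / 2) * ((inner ℝ (X (z - b)) (z - b) : ℝ) - α * ‖z - b‖ ^ 2) < 0 := by
  intro α hα
  have h := hTaylor.def (show (0:ℝ) < α/4 by positivity)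
  rw [Metric.eventually_nhds_iff] at h
  obtain ⟨δ, hδ, hδ'⟩ := h
  refine ⟨δ, hδ, ?_⟩
  intro z hz hzb hzδ
  have hvpos : 0 < ‖z - b‖ := by
    rw [norm_pos_iff]; exact sub_ne_zero.mpr hzb
  set w : EuclideanSpace ℝ (Fin k) := a + (z - b) with hw
  have hwa : w - a = z - b := by rw [hw]; abel
  have h1 : Metric.infDist w K ≤ Metric.infDist a K := by
    calc Metric.infDist w K ≤ dist w z := Metric.infDist_le_dist_of_mem hz
    _ = ‖a - b‖ := by rw [dist_eq_norm]; congr 1; rw [hw]; abel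
    _ = Metric.infDist a K := hb
  have h2 := hδ' (show dist w a < δ by
    rw [dist_eq_norm, hwa]; exact hzδ)
  rw [hwa] at h2
  have h3 : |Metric.infDist w K - Metric.infDist a K - (inner ℝ p (z - b) : ℝ)
      - (1 / 2) * (inner ℝ (X (z - b)) (z - b) : ℝ)| ≤ α/4 * ‖z - b‖ ^ 2 := by
    have : ‖(‖z - b‖ ^ 2 : ℝ)‖ = ‖z - b‖ ^ 2 := by
      rw [Real.norm_eq_abs, abs_of_nonneg (by positivity)]
    simpa [Real.norm_eq_abs, this] using h2
  have h4 := abs_le.mp h3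
  have hvsq : 0 < ‖z - b‖ ^ 2 := by positivity
  nlinarith [h4.1, h4.2, h1, hvsq, hα]
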